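/- Let Λ_av = (1/m) Σ_{k=1}^m Λ_k be the average of left-stochastic matrices Λ_1,…,Λ_m, and suppose Λ = Σ_k q_k Λ_k is any convex combination of the Λ_k. If C = Λ_av⁻¹ exists, then for every probability vector p, (1/2)‖C(Λ p) − p‖₁ ≤ (1/2)‖C‖_{1→1} · max_k ‖Λ_av − Λ_k‖_{1→1}. -/
import Mathlib


/-- A left-stochastic matrix: nonnegative entries, each column sums to 1. -/
def LeftStochastic {ι : Type*} [Fintype ι] (A : Matrix ι ι ℝ) : Prop :=
  (∀ i j, 0 ≤ A i j) ∧ ∀ j, ∑ i, A i j = 1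

/-- A probability vector: nonnegative entries summing to 1. -/
def ProbVec {ι : Type*} [Fintype ι] (p : ι → ℝ) : Prop :=
  (∀ i, 0 ≤ p i) ∧ ∑ i, p i = 1

/-- The ℓ1→ℓ1 induced operator norm, i.e. the maximal column sum of absolute values. -/
noncomputable def opNorm11 {n : ℕ} (A : Matrix (Fin (n + 1)) (Fin (n + 1)) ℝ) : ℝ :=
  Finset.univ.sup' Finset.univ_nonempty (fun j => ∑ i, |A i j|)

lemma opNorm11_nonneg {n : ℕ} (A : Matrix (Fin (n + 1)) (Fin (n + 1)) ℝ) :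
    0 ≤ opNorm11 A := by
  have := Finset.le_sup' (fun j => ∑ i, |A i j|) (Finset.mem_univ (0 : Fin (n+1)))
  exact le_trans (Finset.sum_nonneg fun i _ => abs_nonneg _) this

lemma l1_mulVec_le {n : ℕ} (A : Matrix (Fin (n + 1)) (Fin (n + 1)) ℝ)
    (x : Fin (n + 1) → ℝ) :
    ∑ i, |A.mulVec x i| ≤ opNorm11 A * ∑ j, |x j| := by
  calc ∑ i, |A.mulVec x i| ≤ ∑ i, ∑ j, |A i j * x j| :=
        Finset.sum_le_sum fun i _ =>
          Finset.abs_sum_le_sum_abs (fun j => A i j * x j) Finset.univ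
    _ = ∑ j, (∑ i, |A i j|) * |x j| := by
        rw [Finset.sum_comm]; simp [abs_mul, Finset.sum_mul]
    _ ≤ ∑ j, opNorm11 A * |x j| := by
        apply Finset.sum_le_sum; intro j _
        exact mul_le_mul_of_nonneg_right
          (Finset.le_sup' (fun j => ∑ i, |A i j|) (Finset.mem_univ j)) (abs_nonneg _)
    _ = opNorm11 A * ∑ j, |x j| := by rw [Finset.mul_sum]

lemma sum_mulVec' {n : ℕ} {α : Type*} (s : Finset α)
    (A : α → Matrix (Fin (n + 1)) (Fin (n + 1)) ℝ) (p : Fin (n + 1) → ℝ) :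
    (∑ k ∈ s, A k).mulVec p = ∑ k ∈ s, (A k).mulVec p := by
  induction s using Finset.cons_induction with
  | empty => simp [Matrix.zero_mulVec]
  | cons a s ha ih => simp [Finset.sum_cons, Matrix.add_mulVec, ih]

/-- Proposition 1: if Λ_av is the average of the noise matrices Λ_k, Λ is any convex
combination of the Λ_k, and C = Λ_av⁻¹, then the total variation distance between the
corrected distribution C(Λp) and the ideal p is at most
(1/2)‖C‖₁₁ · max_k ‖Λ_av − Λ_k‖₁₁. -/
theorem stmt_7 {n m : ℕ} (Λs : Fin (m + 1) → Matrix (Fin (n + 1)) (Fin (n + 1)) ℝ)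
    (hΛs : ∀ k, LeftStochastic (Λs k))
    (Λav : Matrix (Fin (n + 1)) (Fin (n + 1)) ℝ)
    (hΛav : Λav = (1 / (m + 1 : ℝ)) • ∑ k, Λs k)
    (q : Fin (m + 1) → ℝ) (hq0 : ∀ k, 0 ≤ q k) (hq1 : ∑ k, q k = 1)
    (Λ : Matrix (Fin (n + 1)) (Fin (n + 1)) ℝ) (hΛ : Λ = ∑ k, q k • Λs k)
    (C : Matrix (Fin (n + 1)) (Fin (n + 1)) ℝ)
    (hC : C * Λav = 1 ∧ Λav * C = 1)
    (p : Fin (n + 1) → ℝ) (hp : ProbVec p) :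
    (1 / 2) * ∑ i, |(C.mulVec (Λ.mulVec p) - p) i|
      ≤ (1 / 2) * opNorm11 C *
        Finset.univ.sup' Finset.univ_nonempty (fun k => opNorm11 (Λav - Λs k)) := by
  set M := Finset.univ.sup' Finset.univ_nonempty (fun k => opNorm11 (Λav - Λs k)) with hM
  have hp1 : ∑ j, |p j| = 1 := by
    rw [← hp.2]; exact Finset.sum_congr rfl fun j _ => abs_of_nonneg (hp.1 j)
  have hid : C.mulVec (Λ.mulVec p) - p
      = ∑ k, q k • C.mulVec ((Λs k - Λav).mulVec p) := by
    have hpC : C.mulVec (Λav.mulVec p) = p := by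
      rw [Matrix.mulVec_mulVec, hC.1, Matrix.one_mulVec]
    have hΛsub : Λ - Λav = ∑ k, q k • (Λs k - Λav) := by
      simp only [smul_sub, Finset.sum_sub_distrib, ← hΛ, ← Finset.sum_smul, hq1, one_smul]
    calc C.mulVec (Λ.mulVec p) - p = C.mulVec ((Λ - Λav).mulVec p) := by
          rw [Matrix.sub_mulVec, Matrix.mulVec_sub, hpC]
      _ = ∑ k, q k • C.mulVec ((Λs k - Λav).mulVec p) := by
          rw [hΛsub, sum_mulVec']
          simp only [Matrix.smul_mulVec]
          simp only [← Matrix.mulVecLin_apply, map_sum, map_smul]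
  rw [hid]
  have hMk : ∀ k, opNorm11 (Λs k - Λav) ≤ M := by
    intro k
    have h1 : opNorm11 (Λs k - Λav) = opNorm11 (Λav - Λs k) := by
      unfold opNorm11
      congr 1; funext j
      apply Finset.sum_congr rfl
      intro i _
      rw [← abs_neg]
      congr 1
      simp [Matrix.sub_apply]
    rw [h1, hM]
    exact Finset.le_sup' (fun k => opNorm11 (Λav - Λs k)) (Finset.mem_univ k)
  have key : ∑ i, |(∑ k, q k • C.mulVec ((Λs k - Λav).mulVec p)) i|
      ≤ opNorm11 C * M := by
    calc ∑ i, |(∑ k, q k • C.mulVec ((Λs k - Λav).mulVec p)) i|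
        ≤ ∑ i, ∑ k, |q k * C.mulVec ((Λs k - Λav).mulVec p) i| := by
          apply Finset.sum_le_sum; intro i _
          simpa using Finset.abs_sum_le_sum_abs
            (fun k => q k * C.mulVec ((Λs k - Λav).mulVec p) i) Finset.univ
      _ = ∑ k, q k * ∑ i, |C.mulVec ((Λs k - Λav).mulVec p) i| := by
          rw [Finset.sum_comm]
          apply Finset.sum_congr rfl; intro k _
          rw [Finset.mul_sum]
          apply Finset.sum_congr rfl; intro i _
          rw [abs_mul, abs_of_nonneg (hq0 k)]
      _ ≤ ∑ k, q k * (opNorm11 C * M) := by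
          apply Finset.sum_le_sum; intro k _
          apply mul_le_mul_of_nonneg_left _ (hq0 k)
          calc ∑ i, |C.mulVec ((Λs k - Λav).mulVec p) i|
              ≤ opNorm11 C * ∑ j, |(Λs k - Λav).mulVec p j| := l1_mulVec_le _ _
            _ ≤ opNorm11 C * (opNorm11 (Λs k - Λav) * ∑ j, |p j|) :=
                mul_le_mul_of_nonneg_left (l1_mulVec_le _ _) (opNorm11_nonneg C)
            _ = opNorm11 C * opNorm11 (Λs k - Λav) := by rw [hp1, mul_one]
            _ ≤ opNorm11 C * M :=
                mul_le_mul_of_nonneg_left (hMk k) (opNorm11_nonneg C)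
      _ = opNorm11 C * M := by rw [← Finset.sum_mul, hq1, one_mul]
  calc (1/2) * ∑ i, |(∑ k, q k • C.mulVec ((Λs k - Λav).mulVec p)) i|
      ≤ (1/2) * (opNorm11 C * M) := by linarith [key]
    _ = (1/2) * opNorm11 C * M := by ring
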